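/- Let 0 < α < 1. There exists a constant c_α depending only on α such that sup_{n∈ℕ_+} ∫_G |K_n^α(x)| dμ(x) ≤ c_α < ∞. -/

import Mathlib

open MeasureTheory Filter Finset
open scoped ENNReal NNReal

noncomputable section

/-- The dyadic group `G = ∏ Z₂`. -/
abbrev G : Type := ℕ → ZMod 2

instance : TopologicalSpace (ZMod 2) := ⊥
instance : DiscreteTopology (ZMod 2) := ⟨rfl⟩
instance : MeasurableSpace (ZMod 2) := ⊤
instance : BorelSpace (ZMod 2) := ⟨borel_eq_top_of_discrete.symm⟩
instance : ContinuousAdd (ZMod 2) := ⟨continuous_of_discreteTopology⟩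
instance : ContinuousNeg (ZMod 2) := ⟨continuous_of_discreteTopology⟩
instance : IsTopologicalAddGroup (ZMod 2) := ⟨⟩

/-- The normalized Haar measure `μ` on the dyadic group `G`. -/
def μG : Measure G := Measure.addHaarMeasure ⊤

/-- The Rademacher functions `r_k(x) = (-1)^{x_k}`. -/
def rad (k : ℕ) (x : G) : ℝ := (-1 : ℝ) ^ (x k).val

/-- The Walsh functions `w_n = ∏_k r_k^{n_k}`, where `n = ∑ n_k 2^k`. -/
def walsh (n : ℕ) (x : G) : ℝ := ∏ k ∈ Finset.range n, rad k x ^ (Nat.testBit n k).toNat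

/-- The Dirichlet kernels `D_n = ∑_{k=0}^{n-1} w_k`. -/
def dirichlet (n : ℕ) (x : G) : ℝ := ∑ k ∈ Finset.range n, walsh k x

/-- The Fejér kernels `K_n = (1/n) ∑_{k=1}^{n} D_k`. -/
def fejer (n : ℕ) (x : G) : ℝ := (n : ℝ)⁻¹ * ∑ k ∈ Finset.Icc 1 n, dirichlet k x

/-- The Cesàro numbers `A_n^α = ((α+1)⋯(α+n))/n!`. -/
def cesA (α : ℝ) (n : ℕ) : ℝ := (∏ i ∈ Finset.range n, (α + i + 1)) / n.factorial

/-- The `(C,α)` kernels `K_n^α = (1/A_n^α) ∑_{k=1}^n A_{n-k}^{α-1} D_k`. -/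
def cesKernel (α : ℝ) (n : ℕ) (x : G) : ℝ :=
  (cesA α n)⁻¹ * ∑ k ∈ Finset.Icc 1 n, cesA (α - 1) (n - k) * dirichlet k x

/-- Walsh–Fourier coefficients of an integrable function. -/
def walshCoeff (f : G → ℝ) (k : ℕ) : ℝ := ∫ x, f x * walsh k x ∂μG

/-- Partial sums `S_m f` of the Walsh–Fourier series. -/
def partialSum (f : G → ℝ) (m : ℕ) (x : G) : ℝ :=
  ∑ k ∈ Finset.range m, walshCoeff f k * walsh k x

/-- The `(C,α)` means `σ_n^α f = (1/A_n^α) ∑_{k=1}^n A_{n-k}^{α-1} S_k f`. -/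
def cesaroMean (α : ℝ) (f : G → ℝ) (n : ℕ) (x : G) : ℝ :=
  (cesA α n)⁻¹ * ∑ k ∈ Finset.Icc 1 n, cesA (α - 1) (n - k) * partialSum f k x

/-- The dyadic interval `I_n(x)`. -/
def dyadicI (n : ℕ) (x : G) : Set G := {y | ∀ i < n, y i = x i}

/-- `e_k ∈ G`: the element whose `k`-th coordinate is `1` and all others `0`. -/
def eG (k : ℕ) : G := fun i => if i = k then 1 else 0

/-- The projection onto the first `n` coordinates. -/
def projG (n : ℕ) : G → (Fin n → ZMod 2) := fun x i => x i

/-- The dyadic filtration `ℱ_n`, generated by the dyadic intervals of length `n`. -/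
def dyadicF : Filtration ℕ (inferInstance : MeasurableSpace G) where
  seq n := MeasurableSpace.comap (projG n) inferInstance
  mono' := by
    intro n m hnm
    have h : projG n = (fun (y : Fin m → ZMod 2) (i : Fin n) => y (Fin.castLE hnm i)) ∘ projG m :=
      rfl
    simp only []
    rw [h, ← MeasurableSpace.comap_comp]
    exact MeasurableSpace.comap_mono
      ((measurable_pi_lambda _ fun i => measurable_pi_apply _).comap_le)
  le' := fun n => (measurable_pi_lambda _ fun i => measurable_pi_apply _).comap_le

/-- The Walsh–Fourier coefficients `F̂(k) = lim_n ∫ F_n w_k dμ` of a martingale. -/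
def martCoeff (F : ℕ → G → ℝ) (k : ℕ) : ℝ :=
  limUnder atTop (fun n => ∫ x, F n x * walsh k x ∂μG)

/-- Partial sums `S_m F` of the Walsh–Fourier series of a martingale. -/
def martSum (F : ℕ → G → ℝ) (m : ℕ) (x : G) : ℝ :=
  ∑ k ∈ Finset.range m, martCoeff F k * walsh k x

/-- The `(C,α)` means of a martingale. -/
def martCesaro (α : ℝ) (F : ℕ → G → ℝ) (n : ℕ) (x : G) : ℝ :=
  (cesA α n)⁻¹ * ∑ k ∈ Finset.Icc 1 n, cesA (α - 1) (n - k) * martSum F k x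

/-- The `L_p(G)` quasi-norm `(∫ |f|^p dμ)^{1/p}`, valued in `ℝ≥0∞`. -/
def LpNormG (p : ℝ) (f : G → ℝ) : ℝ≥0∞ :=
  (∫⁻ x, ENNReal.ofReal |f x| ^ p ∂μG) ^ (1 / p)

/-- The Hardy space quasi-norm `‖F‖_{H_p} = ‖sup_n |F_n|‖_p` of a martingale. -/
def hardyNorm (p : ℝ) (F : ℕ → G → ℝ) : ℝ≥0∞ :=
  (∫⁻ x, (⨆ n, ENNReal.ofReal |F n x|) ^ p ∂μG) ^ (1 / p)

/-- The Hardy quasi-norm of an integrable function, via its generated martingale `(E_n f)`. -/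
def hardyFnNorm (p : ℝ) (f : G → ℝ) : ℝ≥0∞ :=
  hardyNorm p (fun n => μG[f | dyadicF n])


namespace S18
open MeasureTheory Finset

lemma rad_continuous (k : ℕ) : Continuous (rad k) := by
  have h1 : Continuous fun x : G => x k := continuous_apply k
  exact (continuous_of_discreteTopology (α := ZMod 2)
    (f := fun a : ZMod 2 => ((-1 : ℝ)) ^ a.val)).comp h1

lemma rad_sq (k : ℕ) (x : G) : rad k x * rad k x = 1 := by
  unfold rad
  rcases Nat.even_or_odd (x k).val with h | h
  · rw [(Even.neg_one_pow h : ((-1:ℝ))^ (x k).val = 1)]; norm_num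
  · rw [(Odd.neg_one_pow h : ((-1:ℝ))^ (x k).val = -1)]; norm_num

lemma rad_abs (k : ℕ) (x : G) : |rad k x| = 1 := by
  unfold rad
  rcases Nat.even_or_odd (x k).val with h | h
  · rw [(Even.neg_one_pow h : ((-1:ℝ))^ (x k).val = 1)]; norm_num
  · rw [(Odd.neg_one_pow h : ((-1:ℝ))^ (x k).val = -1)]; norm_num

lemma rad_add (k : ℕ) (x y : G) : rad k (x + y) = rad k x * rad k y := by
  unfold rad
  have h : (x + y) k = x k + y k := rfl
  rw [h, ZMod.val_add, ← neg_one_pow_eq_pow_mod_two, pow_add]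

lemma walsh_eq_prod {n M : ℕ} (h : n < 2 ^ M) (x : G) :
    walsh n x = ∏ k ∈ Finset.range M, rad k x ^ (Nat.testBit n k).toNat := by
  have key : ∀ P Q : ℕ, P ≤ Q → n < 2 ^ P →
      (∏ k ∈ Finset.range Q, rad k x ^ (Nat.testBit n k).toNat)
        = ∏ k ∈ Finset.range P, rad k x ^ (Nat.testBit n k).toNat := by
    intro P Q hPQ hP
    refine (Finset.prod_subset (Finset.range_subset_range.2 hPQ) ?_).symm
    intro k _ hk
    have hk' : P ≤ k := by simpa using hk
    have : n < 2 ^ k := lt_of_lt_of_le hP (Nat.pow_le_pow_right (by norm_num) hk')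
    rw [Nat.testBit_lt_two_pow this]
    simp
  have hn : n < 2 ^ n := Nat.lt_two_pow_self (n := n)
  have e1 := key n (max n M) (le_max_left _ _) hn
  have e2 := key M (max n M) (le_max_right _ _) h
  unfold walsh
  rw [← e1, e2]

lemma walsh_xor (a b : ℕ) (x : G) : walsh (a ^^^ b) x = walsh a x * walsh b x := by
  set M := max a b + 1 with hM
  have ha : a < 2 ^ M := lt_of_lt_of_le (Nat.lt_two_pow_self (n := a))
    (Nat.pow_le_pow_right (by norm_num) (by omega))
  have hb : b < 2 ^ M := lt_of_lt_of_le (Nat.lt_two_pow_self (n := b))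
    (Nat.pow_le_pow_right (by norm_num) (by omega))
  have hx : a ^^^ b < 2 ^ M := Nat.xor_lt_two_pow ha hb
  rw [walsh_eq_prod ha, walsh_eq_prod hb, walsh_eq_prod hx, ← Finset.prod_mul_distrib]
  refine Finset.prod_congr rfl fun k _ => ?_
  rw [Nat.testBit_xor]
  cases hpa : a.testBit k <;> cases hpb : b.testBit k <;> simp [rad_sq]

lemma walsh_zero (x : G) : walsh 0 x = 1 := by simp [walsh]

lemma walsh_sq (n : ℕ) (x : G) : walsh n x * walsh n x = 1 := by
  have := walsh_xor n n x
  rw [Nat.xor_self, walsh_zero] at this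
  exact this.symm

lemma walsh_abs (n : ℕ) (x : G) : |walsh n x| = 1 := by
  rcases mul_self_eq_one_iff.1 (walsh_sq n x) with h | h <;> rw [h] <;> norm_num

lemma walsh_add (n : ℕ) (x y : G) : walsh n (x + y) = walsh n x * walsh n y := by
  unfold walsh
  rw [← Finset.prod_mul_distrib]
  exact Finset.prod_congr rfl fun k _ => by rw [rad_add, mul_pow]

lemma walsh_two_pow (k : ℕ) (x : G) : walsh (2 ^ k) x = rad k x := by
  have h : 2 ^ k < 2 ^ (k + 1) := by
    exact Nat.pow_lt_pow_right (by norm_num) (by omega)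
  rw [walsh_eq_prod h]
  rw [Finset.prod_eq_single k]
  · simp [Nat.testBit_two_pow_self]
  · intro j _ hj
    rw [Nat.testBit_two_pow_of_ne (Ne.symm hj)]
    simp
  · intro hk; exact absurd (Finset.self_mem_range_succ k) hk

lemma walsh_continuous (n : ℕ) : Continuous (walsh n) := by
  unfold walsh
  exact continuous_finset_prod _ fun k _ => (rad_continuous k).pow _

lemma walsh_eG (n j : ℕ) : walsh n (eG j) = if n.testBit j then -1 else 1 := by
  have hrad : ∀ k, rad k (eG j) = if k = j then -1 else 1 := by
    intro k
    unfold rad eG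
    by_cases h : k = j <;> simp [h, show ZMod.val (1 : ZMod 2) = 1 from rfl]
  set M := max n j + 1 with hM
  have hn : n < 2 ^ M := lt_of_lt_of_le (Nat.lt_two_pow_self (n := n))
    (Nat.pow_le_pow_right (by norm_num) (by omega))
  rw [walsh_eq_prod hn]
  rw [Finset.prod_eq_single j]
  · rw [hrad j]
    simp only [if_pos rfl]
    cases h : n.testBit j <;> simp
  · intro k _ hk
    rw [hrad k, if_neg hk]
    simp
  · intro hj
    exact absurd (Finset.mem_range.2 (by omega)) hj

end S18
namespace S18x
open MeasureTheory Finset S18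

instance : MeasureTheory.Measure.IsAddLeftInvariant μG := by unfold μG; infer_instance
instance : MeasureTheory.Measure.IsAddRightInvariant μG := inferInstance

lemma μG_univ : μG Set.univ = 1 := by
  have := MeasureTheory.Measure.addHaarMeasure_self (K₀ := (⊤ : TopologicalSpace.PositiveCompacts G))
  simpa [μG] using this

instance : MeasureTheory.IsProbabilityMeasure μG := ⟨μG_univ⟩

lemma integrable_of_continuous {f : G → ℝ} (hf : Continuous f) : Integrable f μG :=
  hf.integrable_of_hasCompactSupport (HasCompactSupport.of_compactSpace f)

lemma walsh_integrable (n : ℕ) : Integrable (walsh n) μG :=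
  integrable_of_continuous (walsh_continuous n)

lemma integral_translate (f : G → ℝ) (a : G) : ∫ x, f (x + a) ∂μG = ∫ x, f x ∂μG :=
  MeasureTheory.integral_add_right_eq_self f a

lemma integral_walsh_zero' : ∫ x, walsh 0 x ∂μG = 1 := by
  simp only [walsh_zero]
  simp [μG_univ]

lemma integral_walsh (n : ℕ) (hn : n ≠ 0) : ∫ x, walsh n x ∂μG = 0 := by
  obtain ⟨j, hj⟩ := Nat.exists_testBit_of_ne_zero hn
  have h1 : ∀ x, walsh n (x + eG j) = - walsh n x := by
    intro x
    rw [walsh_add, walsh_eG, hj]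
    simp [mul_comm]
  have h2 := integral_translate (walsh n) (eG j)
  rw [show (fun x => walsh n (x + eG j)) = fun x => - walsh n x from funext h1] at h2
  rw [integral_neg] at h2
  linarith

end S18x
namespace S18y
open MeasureTheory Finset S18 S18x

lemma two_pow_add_eq_xor {A i : ℕ} (h : i < 2 ^ A) : 2 ^ A + i = 2 ^ A ^^^ i := by
  refine Nat.eq_of_testBit_eq fun k => ?_
  rcases lt_trichotomy k A with hk | hk | hk
  · rw [Nat.testBit_two_pow_add_gt hk, Nat.testBit_xor,
      Nat.testBit_two_pow_of_ne (by omega)]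
    simp
  · subst hk
    rw [Nat.testBit_two_pow_add_eq, Nat.testBit_xor, Nat.testBit_two_pow_self,
      Nat.testBit_lt_two_pow h]
    simp
  · have h1 : 2 ^ A + i < 2 ^ k := by
      calc 2 ^ A + i < 2 ^ A + 2 ^ A := by omega
      _ = 2 ^ (A + 1) := by ring
      _ ≤ 2 ^ k := Nat.pow_le_pow_right (by norm_num) (by omega)
    rw [Nat.testBit_lt_two_pow h1, Nat.testBit_xor,
      Nat.testBit_two_pow_of_ne (by omega),
      Nat.testBit_lt_two_pow (lt_of_lt_of_le h (Nat.pow_le_pow_right (by norm_num) (by omega)))]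
    simp

lemma two_pow_sub_one_sub_eq_xor {A i : ℕ} (h : i < 2 ^ A) :
    2 ^ A - 1 - i = (2 ^ A - 1) ^^^ i := by
  refine Nat.eq_of_testBit_eq fun k => ?_
  have h0 : (0:ℕ) < 2 ^ A := Nat.two_pow_pos A
  have e1 : 2 ^ A - 1 - i = 2 ^ A - (i + 1) := by omega
  rw [e1, Nat.testBit_two_pow_sub_succ h, Nat.testBit_xor, Nat.testBit_two_pow_sub_one]
  by_cases hk : k < A
  · simp [hk]
  · simp only [hk, decide_eq_false hk]
    rw [Nat.testBit_lt_two_pow (lt_of_lt_of_le h (Nat.pow_le_pow_right (by norm_num) (by omega)))]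
    simp

lemma walsh_two_pow_add {A i : ℕ} (h : i < 2 ^ A) (x : G) :
    walsh (2 ^ A + i) x = rad A x * walsh i x := by
  rw [two_pow_add_eq_xor h, walsh_xor, walsh_two_pow]

lemma walsh_two_pow_sub_one_sub {A i : ℕ} (h : i < 2 ^ A) (x : G) :
    walsh (2 ^ A - 1 - i) x = walsh (2 ^ A - 1) x * walsh i x := by
  rw [two_pow_sub_one_sub_eq_xor h, walsh_xor]

lemma dirichlet_zero (x : G) : dirichlet 0 x = 0 := by simp [dirichlet]

lemma dirichlet_succ (n : ℕ) (x : G) : dirichlet (n + 1) x = dirichlet n x + walsh n x := by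
  simp [dirichlet, Finset.sum_range_succ]

lemma dirichlet_continuous (n : ℕ) : Continuous (dirichlet n) := by
  unfold dirichlet
  exact continuous_finset_sum _ fun k _ => walsh_continuous k

lemma dirichlet_integrable (n : ℕ) : Integrable (dirichlet n) μG :=
  integrable_of_continuous (dirichlet_continuous n)

lemma dirichlet_split_top {A j : ℕ} (h : j ≤ 2 ^ A) (x : G) :
    dirichlet (2 ^ A + j) x = dirichlet (2 ^ A) x + rad A x * dirichlet j x := by
  induction j with
  | zero => simp [dirichlet_zero]
  | succ j ih =>
    have hj : j ≤ 2 ^ A := by omega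
    rw [show 2 ^ A + (j + 1) = (2 ^ A + j) + 1 from rfl, dirichlet_succ, ih hj,
      walsh_two_pow_add (by omega), dirichlet_succ]
    ring

lemma dirichlet_split_bot {A j : ℕ} (h : j ≤ 2 ^ A) (x : G) :
    dirichlet (2 ^ A - j) x
      = dirichlet (2 ^ A) x - walsh (2 ^ A - 1) x * dirichlet j x := by
  induction j with
  | zero => simp [dirichlet_zero]
  | succ j ih =>
    have hj : j ≤ 2 ^ A := by omega
    have h1 : 2 ^ A - j = (2 ^ A - (j + 1)) + 1 := by omega
    have h2 : 2 ^ A - (j + 1) = 2 ^ A - 1 - j := by omega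
    have := ih hj
    rw [h1, dirichlet_succ] at this
    have h3 : walsh (2 ^ A - (j + 1)) x = walsh (2 ^ A - 1) x * walsh j x := by
      rw [h2, walsh_two_pow_sub_one_sub (by omega)]
    rw [h3] at this
    rw [dirichlet_succ]
    linarith [this]

lemma dirichlet_two_pow_eq (A : ℕ) (x : G) :
    dirichlet (2 ^ A) x = ∏ i ∈ Finset.range A, (1 + rad i x) := by
  induction A with
  | zero =>
    simp [dirichlet, walsh_zero]
  | succ A ih =>
    have : (2 : ℕ) ^ (A + 1) = 2 ^ A + 2 ^ A := by ring
    rw [this, dirichlet_split_top le_rfl, ih, Finset.prod_range_succ]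
    ring

lemma rad_le (k : ℕ) (x : G) : -1 ≤ rad k x := by
  have := rad_abs k x
  rcases abs_cases (rad k x) with ⟨h1,h2⟩ | ⟨h1,h2⟩ <;> linarith
  
lemma dirichlet_two_pow_nonneg (A : ℕ) (x : G) : 0 ≤ dirichlet (2 ^ A) x := by
  rw [dirichlet_two_pow_eq]
  exact Finset.prod_nonneg fun i _ => by nlinarith [rad_le i x]

lemma integral_dirichlet_two_pow (A : ℕ) : ∫ x, dirichlet (2 ^ A) x ∂μG = 1 := by
  unfold dirichlet
  rw [MeasureTheory.integral_finset_sum _ fun k _ => walsh_integrable k]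
  rw [Finset.sum_eq_single 0]
  · exact integral_walsh_zero'
  · intro k _ hk; exact integral_walsh k hk
  · intro h0; exact absurd (Finset.mem_range.2 (Nat.two_pow_pos A)) h0

lemma integral_abs_dirichlet_two_pow (A : ℕ) : ∫ x, |dirichlet (2 ^ A) x| ∂μG = 1 := by
  rw [show (fun x => |dirichlet (2 ^ A) x|) = fun x => dirichlet (2 ^ A) x from
    funext fun x => abs_of_nonneg (dirichlet_two_pow_nonneg A x)]
  exact integral_dirichlet_two_pow A

end S18y
namespace S18z
open MeasureTheory Finset S18 S18x S18y

def sig (n : ℕ) (x : G) : ℝ := ∑ k ∈ Finset.range n, dirichlet (k + 1) x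

lemma sig_zero (x : G) : sig 0 x = 0 := by simp [sig]

lemma sig_succ (n : ℕ) (x : G) : sig (n + 1) x = sig n x + dirichlet (n + 1) x := by
  simp [sig, Finset.sum_range_succ]

lemma sig_continuous (n : ℕ) : Continuous (sig n) :=
  continuous_finset_sum _ fun k _ => dirichlet_continuous (k + 1)

lemma walsh_add_eG {k t : ℕ} (h : k < 2 ^ t) (x : G) : walsh k (x + eG t) = walsh k x := by
  rw [walsh_add, walsh_eG, Nat.testBit_lt_two_pow h]
  simp

lemma dirichlet_add_eG {k t : ℕ} (h : k ≤ 2 ^ t) (x : G) :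
    dirichlet k (x + eG t) = dirichlet k x := by
  unfold dirichlet
  exact Finset.sum_congr rfl fun j hj =>
    walsh_add_eG (lt_of_lt_of_le (Finset.mem_range.1 hj) h) x

lemma sig_add_eG {n t : ℕ} (h : n ≤ 2 ^ t) (x : G) : sig n (x + eG t) = sig n x := by
  unfold sig
  exact Finset.sum_congr rfl fun j hj =>
    dirichlet_add_eG (by have := Finset.mem_range.1 hj; omega) x

lemma rad_eG_self (t : ℕ) : rad t (eG t) = -1 := by
  unfold rad eG
  simp [show ZMod.val (1 : ZMod 2) = 1 from rfl]

lemma integral_rad_mul_eq_zero {t : ℕ} (f : G → ℝ)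
    (hinv : ∀ x, f (x + eG t) = f x) : ∫ x, rad t x * f x ∂μG = 0 := by
  have h1 : ∀ x, rad t (x + eG t) * f (x + eG t) = - (rad t x * f x) := by
    intro x
    rw [rad_add, rad_eG_self, hinv]
    ring
  have h2 := integral_translate (fun x => rad t x * f x) (eG t)
  rw [show (fun x => rad t (x + eG t) * f (x + eG t)) = fun x => - (rad t x * f x) from
    funext h1] at h2
  rw [integral_neg] at h2
  linarith

lemma sig_split {A m : ℕ} (h : m ≤ 2 ^ A) (x : G) :
    sig (2 ^ A + m) x = sig (2 ^ A) x + m * dirichlet (2 ^ A) x + rad A x * sig m x := by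
  induction m with
  | zero => simp [sig_zero]
  | succ m ih =>
    rw [show 2 ^ A + (m + 1) = (2 ^ A + m) + 1 from rfl, sig_succ, ih (by omega),
      show 2 ^ A + m + 1 = 2 ^ A + (m + 1) from rfl,
      dirichlet_split_top (h := h), sig_succ]
    push_cast
    ring

lemma integral_abs_sig_two_pow (A : ℕ) : ∫ x, |sig (2 ^ A) x| ∂μG ≤ 2 ^ A := by
  induction A with
  | zero =>
    have : ∀ x : G, sig 1 x = 1 := by
      intro x; rw [show (1:ℕ) = 0 + 1 from rfl, sig_succ, sig_zero,
        dirichlet_succ, dirichlet_zero, walsh_zero]; ring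
    simp only [pow_zero, this]
    simp [μG_univ]
  | succ A ih =>
    have hsplit : ∀ x : G, sig (2 ^ (A + 1)) x
        = (1 + rad A x) * sig (2 ^ A) x + (2 ^ A : ℝ) * dirichlet (2 ^ A) x := by
      intro x
      have : (2:ℕ) ^ (A + 1) = 2 ^ A + 2 ^ A := by ring
      rw [this, sig_split le_rfl]
      push_cast
      ring
    have hrad1 : ∀ x : G, (1 + rad A x) ≥ 0 := fun x => by nlinarith [rad_le A x]
    have hpt : ∀ x : G, |sig (2 ^ (A+1)) x|
        ≤ (1 + rad A x) * |sig (2 ^ A) x| + (2 ^ A : ℝ) * |dirichlet (2 ^ A) x| := by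
      intro x
      rw [hsplit x]
      calc |(1 + rad A x) * sig (2 ^ A) x + (2 ^ A : ℝ) * dirichlet (2 ^ A) x|
          ≤ |(1 + rad A x) * sig (2 ^ A) x| + |(2 ^ A : ℝ) * dirichlet (2 ^ A) x| :=
            abs_add_le _ _
        _ = (1 + rad A x) * |sig (2 ^ A) x| + (2 ^ A : ℝ) * |dirichlet (2 ^ A) x| := by
            rw [abs_mul, abs_mul, abs_of_nonneg (hrad1 x),
              abs_of_nonneg (show (0:ℝ) ≤ (2:ℝ) ^ A from by positivity)]
    have hint1 : Integrable (fun x => (1 + rad A x) * |sig (2 ^ A) x|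
        + (2 ^ A : ℝ) * |dirichlet (2 ^ A) x|) μG := by
      apply Integrable.add
      · exact integrable_of_continuous
          (((continuous_const.add (rad_continuous A)).mul (sig_continuous _).abs))
      · exact integrable_of_continuous (continuous_const.mul (dirichlet_continuous _).abs)
    have step1 : ∫ x, |sig (2 ^ (A+1)) x| ∂μG
        ≤ ∫ x, ((1 + rad A x) * |sig (2 ^ A) x| + (2 ^ A : ℝ) * |dirichlet (2 ^ A) x|) ∂μG :=
      integral_mono (integrable_of_continuous (sig_continuous _).abs) hint1 hpt
    have hz : ∫ x, rad A x * |sig (2 ^ A) x| ∂μG = 0 :=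
      integral_rad_mul_eq_zero _ (fun x => by rw [sig_add_eG le_rfl])
    have step2 : ∫ x, ((1 + rad A x) * |sig (2 ^ A) x|
        + (2 ^ A : ℝ) * |dirichlet (2 ^ A) x|) ∂μG
        = ∫ x, |sig (2 ^ A) x| ∂μG + (2 ^ A : ℝ) := by
      rw [integral_add (f := fun x => (1 + rad A x) * |sig (2 ^ A) x|)
          (g := fun x => (2 ^ A : ℝ) * |dirichlet (2 ^ A) x|) (integrable_of_continuous
          (((continuous_const.add (rad_continuous A)).mul (sig_continuous _).abs)))
          (integrable_of_continuous (continuous_const.mul (dirichlet_continuous _).abs))]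
      have e1 : ∀ x : G, (1 + rad A x) * |sig (2 ^ A) x|
          = |sig (2 ^ A) x| + rad A x * |sig (2 ^ A) x| := fun x => by ring
      rw [show (fun x => (1 + rad A x) * |sig (2 ^ A) x|)
          = fun x => |sig (2 ^ A) x| + rad A x * |sig (2 ^ A) x| from funext e1]
      rw [integral_add (f := fun x => |sig (2 ^ A) x|) (g := fun x => rad A x * |sig (2 ^ A) x|)
          (integrable_of_continuous (sig_continuous _).abs)
          (integrable_of_continuous ((rad_continuous A).mul (sig_continuous _).abs)), hz,
        MeasureTheory.integral_const_mul, integral_abs_dirichlet_two_pow]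
      ring
    calc ∫ x, |sig (2 ^ (A+1)) x| ∂μG ≤ ∫ x, |sig (2 ^ A) x| ∂μG + (2 ^ A : ℝ) := by
          rw [← step2]; exact step1
      _ ≤ (2 ^ A : ℝ) + 2 ^ A := by linarith
      _ = (2 : ℝ) ^ (A + 1) := by ring

lemma integral_abs_sig (n : ℕ) : ∫ x, |sig n x| ∂μG ≤ 4 * n := by
  induction n using Nat.strong_induction_on with
  | _ n ih =>
    rcases Nat.eq_zero_or_pos n with rfl | hn
    · simp [sig_zero]
    set A := Nat.log 2 n with hA
    have h1 : 2 ^ A ≤ n := Nat.pow_log_le_self 2 (by omega)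
    have h2 : n < 2 ^ (A + 1) := Nat.lt_pow_succ_log_self (by norm_num) n
    set m := n - 2 ^ A with hm
    have hmlt : m < 2 ^ A := by
      have : (2:ℕ) ^ (A + 1) = 2 ^ A + 2 ^ A := by ring
      omega
    have hsplit : ∀ x : G, sig n x
        = sig (2 ^ A) x + (m : ℝ) * dirichlet (2 ^ A) x + rad A x * sig m x := by
      intro x
      rw [show n = 2 ^ A + m by omega, sig_split (by omega)]
    have hpt : ∀ x : G, |sig n x|
        ≤ |sig (2 ^ A) x| + (m : ℝ) * |dirichlet (2 ^ A) x| + |sig m x| := by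
      intro x
      rw [hsplit x]
      have := abs_add_le (sig (2 ^ A) x + (m : ℝ) * dirichlet (2 ^ A) x) (rad A x * sig m x)
      have h3 := abs_add_le (sig (2 ^ A) x) ((m : ℝ) * dirichlet (2 ^ A) x)
      have h4 : |rad A x * sig m x| = |sig m x| := by
        rw [abs_mul, rad_abs, one_mul]
      have h5 : |(m : ℝ) * dirichlet (2 ^ A) x| = (m : ℝ) * |dirichlet (2 ^ A) x| := by
        rw [abs_mul, abs_of_nonneg (by positivity)]
      calc |sig (2 ^ A) x + (m:ℝ) * dirichlet (2 ^ A) x + rad A x * sig m x|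
          ≤ |sig (2 ^ A) x + (m:ℝ) * dirichlet (2 ^ A) x| + |rad A x * sig m x| := this
        _ ≤ |sig (2 ^ A) x| + |(m:ℝ) * dirichlet (2 ^ A) x| + |rad A x * sig m x| := by linarith
        _ = |sig (2 ^ A) x| + (m : ℝ) * |dirichlet (2 ^ A) x| + |sig m x| := by rw [h4, h5]
    have hint : Integrable (fun x => |sig (2 ^ A) x| + (m : ℝ) * |dirichlet (2 ^ A) x|
        + |sig m x|) μG := by
      refine Integrable.add (Integrable.add ?_ ?_) ?_
      · exact integrable_of_continuous (sig_continuous _).abs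
      · exact integrable_of_continuous (continuous_const.mul (dirichlet_continuous _).abs)
      · exact integrable_of_continuous (sig_continuous _).abs
    have step1 : ∫ x, |sig n x| ∂μG
        ≤ ∫ x, (|sig (2 ^ A) x| + (m : ℝ) * |dirichlet (2 ^ A) x| + |sig m x|) ∂μG :=
      integral_mono (integrable_of_continuous (sig_continuous _).abs) hint hpt
    have step2 : ∫ x, (|sig (2 ^ A) x| + (m : ℝ) * |dirichlet (2 ^ A) x| + |sig m x|) ∂μG
        = ∫ x, |sig (2 ^ A) x| ∂μG + (m : ℝ) + ∫ x, |sig m x| ∂μG := by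
      have e1 : ∫ x, ((|sig (2 ^ A) x| + (m : ℝ) * |dirichlet (2 ^ A) x|) + |sig m x|) ∂μG
          = (∫ x, (|sig (2 ^ A) x| + (m : ℝ) * |dirichlet (2 ^ A) x|) ∂μG)
            + ∫ x, |sig m x| ∂μG :=
        integral_add (Integrable.add
          (integrable_of_continuous (sig_continuous _).abs)
          (integrable_of_continuous (continuous_const.mul (dirichlet_continuous _).abs)))
          (integrable_of_continuous (sig_continuous _).abs)
      have e2 : ∫ x, (|sig (2 ^ A) x| + (m : ℝ) * |dirichlet (2 ^ A) x|) ∂μG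
          = (∫ x, |sig (2 ^ A) x| ∂μG) + ∫ x, (m : ℝ) * |dirichlet (2 ^ A) x| ∂μG :=
        integral_add (integrable_of_continuous (sig_continuous _).abs)
          (integrable_of_continuous (continuous_const.mul (dirichlet_continuous _).abs))
      rw [e1, e2, MeasureTheory.integral_const_mul, integral_abs_dirichlet_two_pow]
      ring
    have ihm := ih m (by omega)
    have h2A := integral_abs_sig_two_pow A
    have hcast : (2:ℝ) ^ A + (m:ℝ) + 4 * (m:ℝ) ≤ 4 * n := by
      have : (n:ℝ) = 2 ^ A + m := by
        rw [show n = 2 ^ A + m by omega]; push_cast; ring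
      rw [this]
      have : (m : ℝ) < 2 ^ A := by exact_mod_cast hmlt
      linarith
    calc ∫ x, |sig n x| ∂μG
        ≤ ∫ x, |sig (2 ^ A) x| ∂μG + (m : ℝ) + ∫ x, |sig m x| ∂μG := by
          rw [← step2]; exact step1
      _ ≤ 2 ^ A + (m : ℝ) + 4 * m := by linarith
      _ ≤ 4 * n := hcast

end S18z
namespace S18c
open MeasureTheory Finset S18 S18x S18y S18z

lemma cesA_zero (α : ℝ) : cesA α 0 = 1 := by simp [cesA]

lemma cesA_pos {α : ℝ} (h : -1 < α) (n : ℕ) : 0 < cesA α n := by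
  unfold cesA
  apply div_pos
  · exact Finset.prod_pos fun i _ => by
      have : (0:ℝ) ≤ i := Nat.cast_nonneg i
      linarith
  · exact_mod_cast Nat.factorial_pos n

lemma cesA_succ (α : ℝ) (n : ℕ) : cesA α (n + 1) = cesA α n + cesA (α - 1) (n + 1) := by
  unfold cesA
  have hshift : (∏ i ∈ Finset.range (n+1), (α - 1 + i + 1))
      = α * ∏ i ∈ Finset.range n, (α + i + 1) := by
    rw [Finset.prod_range_succ' (fun i : ℕ => (α - 1 + i + 1))]
    push_cast
    rw [mul_comm]
    congr 1
    · norm_num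
    · exact Finset.prod_congr rfl fun i _ => by ring
  rw [hshift, Finset.prod_range_succ, Nat.factorial_succ]
  have h2 : ((n:ℝ) + 1) ≠ 0 := by positivity
  have h3 : (n.factorial : ℝ) ≠ 0 := by exact_mod_cast Nat.factorial_ne_zero n
  push_cast
  field_simp
  ring

lemma sum_cesA (α : ℝ) (m : ℕ) :
    ∑ i ∈ Finset.range (m + 1), cesA (α - 1) i = cesA α m := by
  induction m with
  | zero => simp [cesA]
  | succ m ih =>
    rw [Finset.sum_range_succ, ih]
    exact (cesA_succ α m).symm

lemma cesA_mono {α : ℝ} (h : 0 < α) : Monotone (cesA α) := by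
  apply monotone_nat_of_le_succ
  intro n
  rw [cesA_succ]
  have := cesA_pos (show (-1:ℝ) < α - 1 by linarith) (n + 1)
  linarith

lemma cesA_anti {α : ℝ} (h0 : 0 < α) (h1 : α < 1) : Antitone (cesA (α - 1)) := by
  apply antitone_nat_of_succ_le
  intro n
  rw [cesA_succ (α - 1) n]
  have hneg : cesA (α - 1 - 1) (n + 1) ≤ 0 := by
    unfold cesA
    apply div_nonpos_of_nonpos_of_nonneg
    · rw [Finset.prod_range_succ' (fun i : ℕ => (α - 1 - 1 + i + 1))]
      apply mul_nonpos_of_nonneg_of_nonpos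
      · apply Finset.prod_nonneg
        intro i _
        have : (0:ℝ) ≤ i := Nat.cast_nonneg i
        push_cast
        linarith
      · push_cast; linarith
    · positivity
  linarith

lemma cesA_ratio {α : ℝ} (h0 : 0 < α) (h1 : α < 1) {m n : ℕ} (h : 2 * m + 1 ≤ n) :
    (1 + α / 2) * cesA α m ≤ cesA α n := by
  have hQR : cesA α (2*m+1)
      = cesA α m * ∏ i ∈ Finset.Ico m (2*m+1), ((α + i + 1) / ((i:ℝ) + 1)) := by
    unfold cesA
    have hsplit : (∏ i ∈ Finset.range (2*m+1), (α + i + 1))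
        = (∏ i ∈ Finset.range m, (α + i + 1)) * ∏ i ∈ Finset.Ico m (2*m+1), (α + i + 1) :=
      (Finset.prod_range_mul_prod_Ico _ (by omega)).symm
    have hfact : ((2*m+1).factorial : ℝ)
        = (m.factorial : ℝ) * ∏ i ∈ Finset.Ico m (2*m+1), ((i:ℝ) + 1) := by
      have e2 : ∀ q : ℕ, ((q.factorial : ℝ)) = ∏ i ∈ Finset.range q, ((i:ℝ)+1) := by
        intro q
        rw [← Finset.prod_range_add_one_eq_factorial q]
        push_cast
        rfl
      rw [e2, e2, ← Finset.prod_range_mul_prod_Ico (fun i : ℕ => ((i:ℝ)+1)) (show m ≤ 2*m+1 by omega)]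
    rw [hsplit, hfact, Finset.prod_div_distrib, div_mul_div_comm]
  have hcard : (Finset.Ico m (2*m+1)).card = m + 1 := by
    rw [Nat.card_Ico]; omega
  have hconst : (0:ℝ) ≤ 1 + α / (2*m+1) := by positivity
  have hterm : ∀ i ∈ Finset.Ico m (2*m+1), 1 + α / (2*m+1) ≤ (α + i + 1) / ((i:ℝ) + 1) := by
    intro i hi
    have hi2 := Finset.mem_Ico.1 hi
    have hipos : (0:ℝ) < (i:ℝ) + 1 := by positivity
    have e : (α + i + 1) / ((i:ℝ) + 1) = 1 + α / ((i:ℝ)+1) := by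
      field_simp
      ring
    rw [e]
    have hle : (i:ℝ) + 1 ≤ 2*(m:ℝ)+1 := by
      have h' : i + 1 ≤ 2*m+1 := hi2.2
      exact_mod_cast h'
    have : α / (2*(m:ℝ)+1) ≤ α / ((i:ℝ)+1) :=
      div_le_div_of_nonneg_left (le_of_lt h0) hipos hle
    have hcast : α / (2*(m:ℝ)+1) = α / ((2*m+1 : ℕ) : ℝ) := by push_cast; ring_nf
    push_cast
    linarith
  have hprod : (1 + α / (2*m+1)) ^ (m+1)
      ≤ ∏ i ∈ Finset.Ico m (2*m+1), ((α + i + 1) / ((i:ℝ) + 1)) := by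
    calc (1 + α / (2*m+1)) ^ (m+1)
        = ∏ _i ∈ Finset.Ico m (2*m+1), (1 + α / (2*m+1)) := by
          rw [Finset.prod_const, hcard]
      _ ≤ _ := Finset.prod_le_prod (fun i _ => hconst) hterm
  have hbern : 1 + ((m:ℝ)+1) * (α / (2*(m:ℝ)+1)) ≤ (1 + α / (2*(m:ℝ)+1)) ^ (m+1) := by
    have hge0 : (0:ℝ) ≤ α / (2*(m:ℝ)+1) := by positivity
    have hge : (-2:ℝ) ≤ α / (2*(m:ℝ)+1) := by linarith
    have := one_add_mul_le_pow hge (m+1)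
    push_cast at this ⊢
    linarith
  have hhalf : 1 + α / 2 ≤ 1 + ((m:ℝ)+1) * (α / (2*(m:ℝ)+1)) := by
    have hpos : (0:ℝ) < 2*(m:ℝ)+1 := by positivity
    have key : α / 2 ≤ ((m:ℝ)+1) * (α / (2*(m:ℝ)+1)) := by
      rw [mul_div_assoc'] at *
      rw [div_le_div_iff₀ (by norm_num : (0:ℝ) < 2) hpos]
      have hm0 : (0:ℝ) ≤ (m:ℝ) := Nat.cast_nonneg m
      nlinarith
    linarith
  have hfinal : 1 + α / 2 ≤ ∏ i ∈ Finset.Ico m (2*m+1), ((α + i + 1) / ((i:ℝ) + 1)) := by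
    have hc2 : (1 : ℝ) + α / (2*m+1) = 1 + α / (2*(m:ℝ)+1) := by push_cast; ring_nf
    calc 1 + α/2 ≤ 1 + ((m:ℝ)+1) * (α / (2*(m:ℝ)+1)) := hhalf
      _ ≤ (1 + α / (2*(m:ℝ)+1)) ^ (m+1) := hbern
      _ ≤ _ := by rw [← hc2]; exact hprod
  have hmpos := cesA_pos (show (-1:ℝ) < α by linarith) m
  calc (1 + α/2) * cesA α m ≤ (∏ i ∈ Finset.Ico m (2*m+1), ((α + i + 1) / ((i:ℝ) + 1))) * cesA α m := by
        exact mul_le_mul_of_nonneg_right hfinal (le_of_lt hmpos)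
    _ = cesA α (2*m+1) := by rw [hQR]; ring
    _ ≤ cesA α n := cesA_mono h0 h

end S18c
namespace S18m
open MeasureTheory Finset S18 S18x S18y S18z S18c

def SS (α : ℝ) (n : ℕ) (x : G) : ℝ :=
  ∑ j ∈ Finset.range n, cesA (α - 1) (n - 1 - j) * dirichlet (j + 1) x

lemma SS_continuous (α : ℝ) (n : ℕ) : Continuous (SS α n) :=
  continuous_finset_sum _ fun k _ => continuous_const.mul (dirichlet_continuous (k + 1))

lemma abel_identity (c s : ℕ → ℝ) (h0 : s 0 = 0) (L : ℕ) :
    ∑ j ∈ Finset.range L, c (j+1) * (s (j+1) - s j)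
      = ∑ j ∈ Finset.range L, (c (j+1) - c (j+2)) * s (j+1) + c (L+1) * s L := by
  induction L with
  | zero => simp [h0]
  | succ L ih =>
    rw [Finset.sum_range_succ, Finset.sum_range_succ (f := fun j => (c (j+1) - c (j+2)) * s (j+1)), ih]
    ring

lemma coeff_identity (c : ℕ → ℝ) (L : ℕ) :
    ∑ j ∈ Finset.range L, (c (j+1) - c (j+2)) * ((j:ℝ)+1) + c (L+1) * L
      = ∑ j ∈ Finset.range L, c (j+1) := by
  induction L with
  | zero => simp
  | succ L ih =>
    rw [Finset.sum_range_succ, Finset.sum_range_succ (f := fun j => c (j+1)), ← ih]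
    push_cast
    ring

lemma integral_abs_sum_le (f : ℕ → G → ℝ) (hf : ∀ j, Continuous (f j)) (L : ℕ) :
    ∫ x, |∑ j ∈ Finset.range L, f j x| ∂μG ≤ ∑ j ∈ Finset.range L, ∫ x, |f j x| ∂μG := by
  have h1 : ∀ x : G, |∑ j ∈ Finset.range L, f j x| ≤ ∑ j ∈ Finset.range L, |f j x| :=
    fun x => Finset.abs_sum_le_sum_abs _ _
  calc ∫ x, |∑ j ∈ Finset.range L, f j x| ∂μG
      ≤ ∫ x, ∑ j ∈ Finset.range L, |f j x| ∂μG := by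
        apply integral_mono
        · exact integrable_of_continuous (continuous_finset_sum _ fun j _ => hf j).abs
        · exact integrable_of_continuous (continuous_finset_sum _ fun j _ => (hf j).abs)
        · exact h1
    _ = ∑ j ∈ Finset.range L, ∫ x, |f j x| ∂μG :=
        integral_finset_sum _ fun j _ => integrable_of_continuous (hf j).abs

lemma T_bound {α : ℝ} (h0 : 0 < α) (h1 : α < 1) (m A : ℕ) :
    ∫ x, |∑ j ∈ Finset.range (2 ^ A), cesA (α-1) (m + j) * dirichlet j x| ∂μG
      ≤ 4 * ∑ j ∈ Finset.range (2 ^ A), cesA (α-1) (m + j) := by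
  set L := 2 ^ A - 1 with hL
  have hLA : 2 ^ A = L + 1 := by
    have := Nat.one_le_two_pow (n := A)
    omega
  set c : ℕ → ℝ := fun j => cesA (α-1) (m + j) with hc
  have hcpos : ∀ j, 0 < c j := fun j => cesA_pos (by linarith) _
  have hcanti : ∀ j, c (j+1) ≤ c j := fun j => cesA_anti h0 h1 (by omega)
  -- rewrite T in Abel form
  have hT : ∀ x : G, (∑ j ∈ Finset.range (2 ^ A), c j * dirichlet j x)
      = ∑ j ∈ Finset.range L, (c (j+1) - c (j+2)) * sig (j+1) x + c (L+1) * sig L x := by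
    intro x
    rw [hLA, Finset.sum_range_succ' (f := fun j => c j * dirichlet j x)]
    rw [dirichlet_zero, show c 0 * (0:ℝ) = 0 by ring, add_zero]
    rw [show (fun (j:ℕ) => c (j+1) * dirichlet (j+1) x)
        = fun j => c (j+1) * (sig (j+1) x - sig j x) from funext fun j => by
          rw [sig_succ]; ring]
    exact abel_identity c (fun j => sig j x) (sig_zero x) L
  rw [show (fun x => |∑ j ∈ Finset.range (2 ^ A), cesA (α-1) (m + j) * dirichlet j x|)
      = fun x => |∑ j ∈ Finset.range L, (c (j+1) - c (j+2)) * sig (j+1) x + c (L+1) * sig L x|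
      from funext fun x => by rw [← hT x]]
  -- triangle
  have hcont1 : Continuous fun x => ∑ j ∈ Finset.range L, (c (j+1) - c (j+2)) * sig (j+1) x :=
    continuous_finset_sum _ fun j _ => continuous_const.mul (sig_continuous _)
  have hcont2 : Continuous fun x => c (L+1) * sig L x := continuous_const.mul (sig_continuous _)
  have tri : ∫ x, |∑ j ∈ Finset.range L, (c (j+1) - c (j+2)) * sig (j+1) x + c (L+1) * sig L x| ∂μG
      ≤ (∫ x, |∑ j ∈ Finset.range L, (c (j+1) - c (j+2)) * sig (j+1) x| ∂μG)
        + ∫ x, |c (L+1) * sig L x| ∂μG := by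
    have hpt : ∀ x : G, |∑ j ∈ Finset.range L, (c (j+1) - c (j+2)) * sig (j+1) x + c (L+1) * sig L x|
        ≤ |∑ j ∈ Finset.range L, (c (j+1) - c (j+2)) * sig (j+1) x| + |c (L+1) * sig L x| :=
      fun x => abs_add_le _ _
    calc ∫ x, |∑ j ∈ Finset.range L, (c (j+1) - c (j+2)) * sig (j+1) x + c (L+1) * sig L x| ∂μG
        ≤ ∫ x, (|∑ j ∈ Finset.range L, (c (j+1) - c (j+2)) * sig (j+1) x| + |c (L+1) * sig L x|) ∂μG := by
          apply integral_mono
          · exact integrable_of_continuous (hcont1.add hcont2).abs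
          · exact integrable_of_continuous (hcont1.abs.add hcont2.abs)
          · exact hpt
      _ = _ := integral_add (integrable_of_continuous hcont1.abs)
            (integrable_of_continuous hcont2.abs)
  have sum_bound : ∫ x, |∑ j ∈ Finset.range L, (c (j+1) - c (j+2)) * sig (j+1) x| ∂μG
      ≤ ∑ j ∈ Finset.range L, (c (j+1) - c (j+2)) * (4 * ((j:ℝ)+1)) := by
    calc ∫ x, |∑ j ∈ Finset.range L, (c (j+1) - c (j+2)) * sig (j+1) x| ∂μG
        ≤ ∑ j ∈ Finset.range L, ∫ x, |(c (j+1) - c (j+2)) * sig (j+1) x| ∂μG :=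
          integral_abs_sum_le _ (fun j => continuous_const.mul (sig_continuous _)) L
      _ ≤ ∑ j ∈ Finset.range L, (c (j+1) - c (j+2)) * (4 * ((j:ℝ)+1)) := by
          apply Finset.sum_le_sum
          intro j _
          have e : ∀ x : G, |(c (j+1) - c (j+2)) * sig (j+1) x|
              = (c (j+1) - c (j+2)) * |sig (j+1) x| := fun x => by
            rw [abs_mul, abs_of_nonneg (by linarith [hcanti (j+1)])]
          rw [show (fun x => |(c (j+1) - c (j+2)) * sig (j+1) x|)
              = fun x => (c (j+1) - c (j+2)) * |sig (j+1) x| from funext e,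
            MeasureTheory.integral_const_mul]
          have hs := integral_abs_sig (j+1)
          have hnn : 0 ≤ c (j+1) - c (j+2) := by linarith [hcanti (j+1)]
          have : (4:ℝ) * ((j:ℕ)+1 : ℕ) = 4 * ((j:ℝ)+1) := by push_cast; ring
          calc (c (j+1) - c (j+2)) * ∫ x, |sig (j+1) x| ∂μG
              ≤ (c (j+1) - c (j+2)) * (4 * ((j+1 : ℕ):ℝ)) :=
                mul_le_mul_of_nonneg_left hs hnn
            _ = (c (j+1) - c (j+2)) * (4 * ((j:ℝ)+1)) := by push_cast; ring
  have last_bound : ∫ x, |c (L+1) * sig L x| ∂μG ≤ c (L+1) * (4 * (L:ℝ)) := by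
    have e : ∀ x : G, |c (L+1) * sig L x| = c (L+1) * |sig L x| := fun x => by
      rw [abs_mul, abs_of_nonneg (le_of_lt (hcpos (L+1)))]
    rw [show (fun x => |c (L+1) * sig L x|) = fun x => c (L+1) * |sig L x| from funext e,
      MeasureTheory.integral_const_mul]
    exact mul_le_mul_of_nonneg_left (integral_abs_sig L) (le_of_lt (hcpos (L+1)))
  have total : ∑ j ∈ Finset.range L, (c (j+1) - c (j+2)) * (4 * ((j:ℝ)+1)) + c (L+1) * (4 * (L:ℝ))
      = 4 * (∑ j ∈ Finset.range L, c (j+1)) := by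
    have := coeff_identity c L
    have e : ∑ j ∈ Finset.range L, (c (j+1) - c (j+2)) * (4 * ((j:ℝ)+1))
        = 4 * ∑ j ∈ Finset.range L, (c (j+1) - c (j+2)) * ((j:ℝ)+1) := by
      rw [Finset.mul_sum]
      exact Finset.sum_congr rfl fun j _ => by ring
    rw [e, ← this]
    ring
  have sum_le : ∑ j ∈ Finset.range L, c (j+1) ≤ ∑ j ∈ Finset.range (2 ^ A), c j := by
    rw [hLA, Finset.sum_range_succ' (f := fun j => c j)]
    have := hcpos 0
    linarith
  calc ∫ x, |∑ j ∈ Finset.range L, (c (j+1) - c (j+2)) * sig (j+1) x + c (L+1) * sig L x| ∂μG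
      ≤ (∫ x, |∑ j ∈ Finset.range L, (c (j+1) - c (j+2)) * sig (j+1) x| ∂μG)
        + ∫ x, |c (L+1) * sig L x| ∂μG := tri
    _ ≤ ∑ j ∈ Finset.range L, (c (j+1) - c (j+2)) * (4 * ((j:ℝ)+1)) + c (L+1) * (4 * (L:ℝ)) := by
        linarith
    _ = 4 * (∑ j ∈ Finset.range L, c (j+1)) := total
    _ ≤ 4 * ∑ j ∈ Finset.range (2 ^ A), c j := by linarith
end S18m
namespace S18f
open MeasureTheory Finset S18 S18x S18y S18z S18c S18m

lemma SS_decomp {α : ℝ} {n A m : ℕ} (hn : n = 2 ^ A + m) (hm : m < 2 ^ A) (x : G) :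
    SS α n x
      = (∑ j ∈ Finset.range (2 ^ A), cesA (α-1) (m + j) + ∑ j ∈ Finset.range m, cesA (α-1) j)
          * dirichlet (2 ^ A) x
        - walsh (2 ^ A - 1) x * (∑ j ∈ Finset.range (2 ^ A), cesA (α-1) (m + j) * dirichlet j x)
        + rad A x * SS α m x := by
  subst hn
  have lhs_eq : SS α (2 ^ A + m) x
      = ∑ j ∈ Finset.range (2 ^ A + m), cesA (α-1) (2 ^ A + m - 1 - j) * dirichlet (j+1) x := rfl
  rw [lhs_eq,
    Finset.sum_range_add (f := fun j => cesA (α-1) (2 ^ A + m - 1 - j) * dirichlet (j+1) x)]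
  have part2 : (∑ i ∈ Finset.range m,
        cesA (α-1) (2 ^ A + m - 1 - (2 ^ A + i)) * dirichlet (2 ^ A + i + 1) x)
      = (∑ j ∈ Finset.range m, cesA (α-1) j) * dirichlet (2 ^ A) x + rad A x * SS α m x := by
    have e1 : ∀ i ∈ Finset.range m,
        cesA (α-1) (2 ^ A + m - 1 - (2 ^ A + i)) * dirichlet (2 ^ A + i + 1) x
          = cesA (α-1) (m - 1 - i) * dirichlet (2 ^ A) x
            + rad A x * (cesA (α-1) (m - 1 - i) * dirichlet (i + 1) x) := by
      intro i hi
      have hi' : i < m := Finset.mem_range.1 hi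
      have e2 : 2 ^ A + m - 1 - (2 ^ A + i) = m - 1 - i := by omega
      have e3 : 2 ^ A + i + 1 = 2 ^ A + (i + 1) := by omega
      rw [e2, e3, dirichlet_split_top (by omega)]
      ring
    rw [Finset.sum_congr rfl e1, Finset.sum_add_distrib, ← Finset.sum_mul, ← Finset.mul_sum]
    have e4 : (∑ i ∈ Finset.range m, cesA (α-1) (m - 1 - i))
        = ∑ j ∈ Finset.range m, cesA (α-1) j := Finset.sum_range_reflect _ m
    rw [e4]
    rfl
  have part1 : (∑ j ∈ Finset.range (2 ^ A),
        cesA (α-1) (2 ^ A + m - 1 - j) * dirichlet (j+1) x)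
      = (∑ j ∈ Finset.range (2 ^ A), cesA (α-1) (m + j)) * dirichlet (2 ^ A) x
        - walsh (2 ^ A - 1) x
            * ∑ j ∈ Finset.range (2 ^ A), cesA (α-1) (m + j) * dirichlet j x := by
    have refl : (∑ j ∈ Finset.range (2 ^ A),
          cesA (α-1) (2 ^ A + m - 1 - j) * dirichlet (j+1) x)
        = ∑ j ∈ Finset.range (2 ^ A),
            cesA (α-1) (2 ^ A + m - 1 - (2 ^ A - 1 - j)) * dirichlet ((2 ^ A - 1 - j) + 1) x :=
      (Finset.sum_range_reflect
        (fun j => cesA (α-1) (2 ^ A + m - 1 - j) * dirichlet (j+1) x) (2 ^ A)).symm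
    rw [refl]
    have e5 : ∀ j ∈ Finset.range (2 ^ A),
        cesA (α-1) (2 ^ A + m - 1 - (2 ^ A - 1 - j)) * dirichlet ((2 ^ A - 1 - j) + 1) x
          = cesA (α-1) (m + j) * dirichlet (2 ^ A) x
            - walsh (2 ^ A - 1) x * (cesA (α-1) (m + j) * dirichlet j x) := by
      intro j hj
      have hj' : j < 2 ^ A := Finset.mem_range.1 hj
      have h2A : 1 ≤ 2 ^ A := Nat.one_le_two_pow
      have e6 : 2 ^ A + m - 1 - (2 ^ A - 1 - j) = m + j := by omega
      have e7 : (2 ^ A - 1 - j) + 1 = 2 ^ A - j := by omega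
      rw [e6, e7, dirichlet_split_bot (by omega)]
      ring
    rw [Finset.sum_congr rfl e5, Finset.sum_sub_distrib, ← Finset.sum_mul, ← Finset.mul_sum]
  rw [part1, part2]
  ring

theorem main_bound {α : ℝ} (h0 : 0 < α) (h1 : α < 1) (n : ℕ) :
    ∫ x, |SS α n x| ∂μG ≤ (6 * (2 + α) / α) * cesA α n := by
  induction n using Nat.strong_induction_on with
  | _ n ih =>
    have hCpos : 0 < 6 * (2 + α) / α := by positivity
    rcases Nat.eq_zero_or_pos n with rfl | hn
    · have : ∀ x : G, SS α 0 x = 0 := fun x => by simp [SS]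
      rw [show (fun x => |SS α 0 x|) = fun _ => (0:ℝ) from funext fun x => by rw [this x]; simp]
      rw [integral_const]
      simp only [smul_eq_mul, mul_zero]
      have := cesA_pos (show (-1:ℝ) < α by linarith) 0
      positivity
    set A := Nat.log 2 n with hA
    have h2A : 2 ^ A ≤ n := Nat.pow_log_le_self 2 (by omega)
    have h2A' : n < 2 ^ (A + 1) := Nat.lt_pow_succ_log_self (by norm_num) n
    set m := n - 2 ^ A with hm
    have hneq : n = 2 ^ A + m := by omega
    have hmlt : m < 2 ^ A := by
      have : (2:ℕ) ^ (A + 1) = 2 ^ A + 2 ^ A := by ring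
      omega
    -- coefficient bounds
    have hsub : ∀ (s : Finset ℕ), s ⊆ Finset.range (n + 1)
        → ∑ j ∈ s, cesA (α-1) j ≤ cesA α n := by
      intro s hs
      rw [← sum_cesA α n]
      exact Finset.sum_le_sum_of_subset_of_nonneg hs
        (fun i _ _ => le_of_lt (cesA_pos (by linarith) i))
    have hcoef2 : ∑ j ∈ Finset.range m, cesA (α-1) j ≤ cesA α n := by
      have e : ∑ j ∈ Finset.range m, cesA (α-1) j
          = ∑ j ∈ Finset.range m, cesA (α-1) j := rfl
      exact hsub (Finset.range m) (Finset.range_subset_range.2 (by omega))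
    have hcoef1 : ∑ j ∈ Finset.range (2 ^ A), cesA (α-1) (m + j) ≤ cesA α n := by
      have e : ∑ j ∈ Finset.range (2 ^ A), cesA (α-1) (m + j)
          = ∑ i ∈ Finset.Ico m n, cesA (α-1) i := by
        rw [Finset.sum_Ico_eq_sum_range]
        have : n - m = 2 ^ A := by omega
        rw [this]
      rw [e]
      exact hsub _ (fun i hi => Finset.mem_range.2 (by
        have := Finset.mem_Ico.1 hi; omega))
    have hcoefnn : (0:ℝ) ≤ ∑ j ∈ Finset.range (2 ^ A), cesA (α-1) (m + j)
        + ∑ j ∈ Finset.range m, cesA (α-1) j := by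
      apply add_nonneg <;>
        exact Finset.sum_nonneg fun i _ => le_of_lt (cesA_pos (by linarith) _)
    set coefD : ℝ := ∑ j ∈ Finset.range (2 ^ A), cesA (α-1) (m + j)
        + ∑ j ∈ Finset.range m, cesA (α-1) j with hcoefD
    set Tf : G → ℝ := fun x => ∑ j ∈ Finset.range (2 ^ A), cesA (α-1) (m + j) * dirichlet j x
      with hTf
    have hTcont : Continuous Tf :=
      continuous_finset_sum _ fun j _ => continuous_const.mul (dirichlet_continuous j)
    -- pointwise bound
    have hpt : ∀ x : G, |SS α n x|
        ≤ coefD * |dirichlet (2 ^ A) x| + |Tf x| + |SS α m x| := by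
      intro x
      rw [SS_decomp hneq hmlt x]
      have t1 : |(coefD) * dirichlet (2 ^ A) x - walsh (2 ^ A - 1) x * Tf x
          + rad A x * SS α m x|
          ≤ |coefD * dirichlet (2 ^ A) x| + |walsh (2 ^ A - 1) x * Tf x|
            + |rad A x * SS α m x| := by
        calc |coefD * dirichlet (2 ^ A) x - walsh (2 ^ A - 1) x * Tf x + rad A x * SS α m x|
            ≤ |coefD * dirichlet (2 ^ A) x - walsh (2 ^ A - 1) x * Tf x|
              + |rad A x * SS α m x| := abs_add_le _ _
          _ ≤ _ := by
              have := abs_sub (coefD * dirichlet (2 ^ A) x) (walsh (2 ^ A - 1) x * Tf x)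
              linarith
      have e1 : |coefD * dirichlet (2 ^ A) x| = coefD * |dirichlet (2 ^ A) x| := by
        rw [abs_mul, abs_of_nonneg hcoefnn]
      have e2 : |walsh (2 ^ A - 1) x * Tf x| = |Tf x| := by
        rw [abs_mul, walsh_abs, one_mul]
      have e3 : |rad A x * SS α m x| = |SS α m x| := by
        rw [abs_mul, rad_abs, one_mul]
      rw [e1, e2, e3] at t1
      exact t1
    -- integrate
    have int1 : Integrable (fun x => coefD * |dirichlet (2 ^ A) x| + |Tf x| + |SS α m x|) μG := by
      refine Integrable.add (Integrable.add ?_ ?_) ?_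
      · exact integrable_of_continuous (continuous_const.mul (dirichlet_continuous _).abs)
      · exact integrable_of_continuous hTcont.abs
      · exact integrable_of_continuous (SS_continuous α m).abs
    have step1 : ∫ x, |SS α n x| ∂μG
        ≤ ∫ x, (coefD * |dirichlet (2 ^ A) x| + |Tf x| + |SS α m x|) ∂μG :=
      integral_mono (integrable_of_continuous (SS_continuous α n).abs) int1 hpt
    have step2 : ∫ x, (coefD * |dirichlet (2 ^ A) x| + |Tf x| + |SS α m x|) ∂μG
        = coefD + (∫ x, |Tf x| ∂μG) + ∫ x, |SS α m x| ∂μG := by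
      have e1 : ∫ x, (coefD * |dirichlet (2 ^ A) x| + |Tf x| + |SS α m x|) ∂μG
          = (∫ x, (coefD * |dirichlet (2 ^ A) x| + |Tf x|) ∂μG) + ∫ x, |SS α m x| ∂μG :=
        integral_add (Integrable.add
          (integrable_of_continuous (continuous_const.mul (dirichlet_continuous _).abs))
          (integrable_of_continuous hTcont.abs))
          (integrable_of_continuous (SS_continuous α m).abs)
      have e2 : ∫ x, (coefD * |dirichlet (2 ^ A) x| + |Tf x|) ∂μG
          = (∫ x, coefD * |dirichlet (2 ^ A) x| ∂μG) + ∫ x, |Tf x| ∂μG :=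
        integral_add (integrable_of_continuous (continuous_const.mul (dirichlet_continuous _).abs))
          (integrable_of_continuous hTcont.abs)
      rw [e1, e2, MeasureTheory.integral_const_mul, integral_abs_dirichlet_two_pow, mul_one]
    have hT := T_bound h0 h1 m A
    have ihm := ih m (by omega)
    have hratio : cesA α m ≤ (2 / (2 + α)) * cesA α n := by
      have := cesA_ratio h0 h1 (show 2 * m + 1 ≤ n by omega)
      have hp : (0:ℝ) < 1 + α / 2 := by linarith
      rw [div_mul_eq_mul_div, le_div_iff₀ (by linarith : (0:ℝ) < 2 + α)]
      nlinarith
    have hfin : coefD + 4 * (∑ j ∈ Finset.range (2 ^ A), cesA (α-1) (m + j))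
        + (6 * (2 + α) / α) * cesA α m ≤ (6 * (2 + α) / α) * cesA α n := by
      have hc : coefD ≤ 2 * cesA α n := by rw [hcoefD]; linarith
      have h4 : 4 * (∑ j ∈ Finset.range (2 ^ A), cesA (α-1) (m + j)) ≤ 4 * cesA α n := by
        linarith
      have hC : (6 * (2 + α) / α) * cesA α m
          ≤ (6 * (2 + α) / α) * ((2 / (2 + α)) * cesA α n) :=
        mul_le_mul_of_nonneg_left hratio (le_of_lt hCpos)
      have key : (6 * (2 + α) / α) * ((2 / (2 + α)) * cesA α n)
          = (12 / α) * cesA α n := by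
        field_simp
        ring
      have hsum : 2 * cesA α n + 4 * cesA α n + (12 / α) * cesA α n
          = (6 * (2 + α) / α) * cesA α n := by
        field_simp
        ring
      linarith
    calc ∫ x, |SS α n x| ∂μG
        ≤ coefD + (∫ x, |Tf x| ∂μG) + ∫ x, |SS α m x| ∂μG := by rw [← step2]; exact step1
      _ ≤ coefD + 4 * (∑ j ∈ Finset.range (2 ^ A), cesA (α-1) (m + j))
          + (6 * (2 + α) / α) * cesA α m := by
          have : ∫ x, |Tf x| ∂μG ≤ 4 * ∑ j ∈ Finset.range (2 ^ A), cesA (α-1) (m + j) := hT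
          linarith
      _ ≤ (6 * (2 + α) / α) * cesA α n := hfin

end S18f

/-- uniform `L_1` bound for the `(C,α)` kernels:
`sup_n ∫_G |K_n^α| dμ ≤ c_α < ∞`. -/
theorem statement18 (α : ℝ) (hα0 : 0 < α) (hα1 : α < 1) :
    ∃ c : ℝ, ∀ n : ℕ, 1 ≤ n → (∫ x, |cesKernel α n x| ∂μG) ≤ c := by
  open MeasureTheory Finset S18 S18x S18y S18z S18c S18m S18f in
  refine ⟨6 * (2 + α) / α, fun n hn => ?_⟩
  have hIcc : ∀ x : G,
      (∑ k ∈ Finset.Icc 1 n, cesA (α - 1) (n - k) * dirichlet k x) = S18m.SS α n x := by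
    intro x
    rw [← Finset.Ico_add_one_right_eq_Icc, Finset.sum_Ico_eq_sum_range]
    have hr : n + 1 - 1 = n := by omega
    rw [hr]
    refine Finset.sum_congr rfl fun i _ => ?_
    have e1 : n - (1 + i) = n - 1 - i := by omega
    have e2 : 1 + i = i + 1 := by omega
    rw [e1, e2]
  have hpos := S18c.cesA_pos (show (-1:ℝ) < α by linarith) n
  have habs : ∀ x : G, |cesKernel α n x| = (cesA α n)⁻¹ * |S18m.SS α n x| := by
    intro x
    unfold cesKernel
    rw [hIcc x, abs_mul, abs_of_nonneg (le_of_lt (inv_pos.2 hpos))]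
  rw [show (fun x => |cesKernel α n x|) = fun x => (cesA α n)⁻¹ * |S18m.SS α n x| from
    funext habs, MeasureTheory.integral_const_mul]
  have hmain := S18f.main_bound hα0 hα1 n
  calc (cesA α n)⁻¹ * ∫ x, |S18m.SS α n x| ∂μG
      ≤ (cesA α n)⁻¹ * ((6 * (2 + α) / α) * cesA α n) :=
        mul_le_mul_of_nonneg_left hmain (le_of_lt (inv_pos.2 hpos))
    _ = 6 * (2 + α) / α := by field_simp

end
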